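/- Circumradius of regular simplices: Let d ≥ 1 and let v : Fin (d+1) → EuclideanSpace ℝ (Fin d) be the vertices of a regular d-simplex with common edge length ℓ > 0, and let κ = (1/(d+1)) • ∑ i, v i be its barycenter. Then (i) dist κ (v i) = sqrt(d / (2*(d+1))) * ℓ for every i, (ii) the convex hull of the vertices is contained in the closed ball centered at κ of radius sqrt(d / (2*(d+1))) * ℓ, and (iii) every closed ball containing all the vertices has radius at least sqrt(d / (2*(d+1))) * ℓ. Hence the circumradius of the regular d-simplex coincides with its barycentric circumradius and equals sqrt(d / (2*(d+1))) * ℓ. -/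

import Mathlib

open scoped RealInnerProductSpace

private lemma sum_ite_aux (d : ℕ) (i : Fin (d + 1)) (a : ℝ) :
    (∑ k : Fin (d + 1), if k = i then (0 : ℝ) else a) = (d : ℝ) * a := by
  classical
  rw [← Finset.sum_erase_add _ _ (Finset.mem_univ i)]
  have h : ∀ k ∈ Finset.univ.erase i, (if k = i then (0 : ℝ) else a) = a := by
    intro k hk; simp [Finset.ne_of_mem_erase hk]
  rw [Finset.sum_congr rfl h, Finset.sum_const,
    Finset.card_erase_of_mem (Finset.mem_univ i)]
  simp [Finset.card_univ, mul_comm]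

/-- **Circumradius of regular simplices.** For a regular `d`-simplex with edge
length `ℓ` and barycenter `κ`, every vertex is at distance
`sqrt (d/(2*(d+1))) * ℓ` from `κ`, the simplex is contained in the closed ball
about `κ` of that radius, and no closed ball of smaller radius contains all the
vertices. -/
theorem circumradius_regular_simplex (d : ℕ) (hd : 1 ≤ d) (ℓ : ℝ) (hℓ : 0 < ℓ)
    (v : Fin (d + 1) → EuclideanSpace ℝ (Fin d))
    (hai : AffineIndependent ℝ v)
    (hreg : ∀ i j, i ≠ j → dist (v i) (v j) = ℓ)
    (κ : EuclideanSpace ℝ (Fin d))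
    (hκ : κ = (1 / ((d : ℝ) + 1)) • ∑ i, v i) :
    (∀ i, dist κ (v i) = Real.sqrt ((d : ℝ) / (2 * ((d : ℝ) + 1))) * ℓ) ∧
    convexHull ℝ (Set.range v) ⊆
      Metric.closedBall κ (Real.sqrt ((d : ℝ) / (2 * ((d : ℝ) + 1))) * ℓ) ∧
    (∀ (c : EuclideanSpace ℝ (Fin d)) (r : ℝ),
      (∀ i, v i ∈ Metric.closedBall c r) →
        Real.sqrt ((d : ℝ) / (2 * ((d : ℝ) + 1))) * ℓ ≤ r) := by
  classical
  have hd1 : ((d : ℝ) + 1) ≠ 0 := by positivity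
  set q : ℝ := (d : ℝ) / (2 * ((d : ℝ) + 1)) with hqdef
  have hq0 : (0 : ℝ) ≤ q := by positivity
  -- squared norms of edge vectors
  have hnorm : ∀ j k : Fin (d + 1),
      ‖v j - v k‖ ^ 2 = if j = k then (0 : ℝ) else ℓ ^ 2 := by
    intro j k
    by_cases h : j = k
    · simp [h]
    · rw [if_neg h, ← dist_eq_norm, hreg j k h]
  -- key squared-distance computation
  have key : ∀ i, ‖κ - v i‖ ^ 2 = q * ℓ ^ 2 := by
    intro i
    have hsub : κ - v i = (1 / ((d : ℝ) + 1)) • ∑ j, (v j - v i) := by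
      rw [hκ, Finset.sum_sub_distrib, Finset.sum_const, Finset.card_univ,
        Fintype.card_fin, smul_sub, ← Nat.cast_smul_eq_nsmul ℝ, smul_smul]
      push_cast
      rw [one_div, inv_mul_cancel₀ hd1, one_smul]
    have hterm : ∀ j k : Fin (d + 1), ⟪v j - v i, v k - v i⟫ =
        ((if j = i then (0 : ℝ) else ℓ ^ 2) + (if k = i then (0 : ℝ) else ℓ ^ 2)
          - (if j = k then (0 : ℝ) else ℓ ^ 2)) / 2 := by
      intro j k
      have h1 := norm_sub_sq_real (v j - v i) (v k - v i)
      rw [sub_sub_sub_cancel_right] at h1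
      rw [hnorm j i, hnorm k i, hnorm j k] at h1
      linarith
    have hrow : ∀ j : Fin (d + 1), ⟪v j - v i, ∑ k, (v k - v i)⟫ =
        (if j = i then (0 : ℝ) else ℓ ^ 2) * ((d : ℝ) + 1) / 2 := by
      intro j
      rw [inner_sum]
      calc (∑ k, ⟪v j - v i, v k - v i⟫)
          = ∑ k : Fin (d + 1),
            (((if j = i then (0 : ℝ) else ℓ ^ 2) + (if k = i then (0 : ℝ) else ℓ ^ 2)
              - (if j = k then (0 : ℝ) else ℓ ^ 2)) / 2) :=
            Finset.sum_congr rfl fun k _ => hterm j k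
        _ = _ := by
            rw [← Finset.sum_div, Finset.sum_sub_distrib, Finset.sum_add_distrib,
              Finset.sum_const, Finset.card_univ, Fintype.card_fin, nsmul_eq_mul,
              sum_ite_aux d i (ℓ ^ 2)]
            have h3 : (∑ k : Fin (d + 1), if j = k then (0 : ℝ) else ℓ ^ 2)
                = (d : ℝ) * ℓ ^ 2 := by
              rw [show (∑ k : Fin (d + 1), if j = k then (0 : ℝ) else ℓ ^ 2)
                  = ∑ k : Fin (d + 1), if k = j then (0 : ℝ) else ℓ ^ 2 from
                  Finset.sum_congr rfl fun k _ => by simp [eq_comm],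
                sum_ite_aux d j (ℓ ^ 2)]
            rw [h3]
            push_cast
            ring
    have hS : ‖∑ j, (v j - v i)‖ ^ 2 = (d : ℝ) * ((d : ℝ) + 1) / 2 * ℓ ^ 2 := by
      rw [← real_inner_self_eq_norm_sq, sum_inner,
        Finset.sum_congr rfl fun j _ => hrow j]
      rw [show (∑ j : Fin (d + 1), (if j = i then (0 : ℝ) else ℓ ^ 2) * ((d : ℝ) + 1) / 2)
          = (∑ j : Fin (d + 1), if j = i then (0 : ℝ) else ℓ ^ 2) * ((d : ℝ) + 1) / 2 by
          rw [← Finset.sum_div, ← Finset.sum_mul], sum_ite_aux d i (ℓ ^ 2)]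
      ring
    rw [hsub, norm_smul, mul_pow, hS, Real.norm_eq_abs, sq_abs, hqdef]
    field_simp
  have hR : Real.sqrt q * ℓ = Real.sqrt (q * ℓ ^ 2) := by
    rw [Real.sqrt_mul hq0, Real.sqrt_sq hℓ.le]
  have hdist : ∀ i, dist κ (v i) = Real.sqrt q * ℓ := by
    intro i
    rw [hR, dist_eq_norm, ← key i, Real.sqrt_sq (norm_nonneg _)]
  refine ⟨hdist, ?_, ?_⟩
  · -- convex hull containment
    apply convexHull_min
    · rintro x ⟨i, rfl⟩
      rw [Metric.mem_closedBall, dist_comm, hdist i]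
    · exact convex_closedBall _ _
  · -- minimality
    intro c r hc
    have hr0 : 0 ≤ r := le_trans dist_nonneg (Metric.mem_closedBall.1 (hc 0))
    have hzero : (∑ i, (v i - κ)) = 0 := by
      rw [Finset.sum_sub_distrib, Finset.sum_const, Finset.card_univ, Fintype.card_fin,
        ← Nat.cast_smul_eq_nsmul ℝ, hκ, smul_smul, sub_eq_zero]
      push_cast
      rw [mul_one_div, div_self hd1, one_smul]
    have hsum : (∑ i, ‖v i - c‖ ^ 2)
        = ((d : ℝ) + 1) * (q * ℓ ^ 2) + ((d : ℝ) + 1) * ‖κ - c‖ ^ 2 := by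
      have expand : ∀ i : Fin (d + 1), ‖v i - c‖ ^ 2
          = ‖v i - κ‖ ^ 2 + 2 * ⟪v i - κ, κ - c⟫ + ‖κ - c‖ ^ 2 := by
        intro i
        rw [show v i - c = (v i - κ) + (κ - c) by abel]
        exact norm_add_sq_real _ _
      rw [Finset.sum_congr rfl fun i _ => expand i, Finset.sum_add_distrib,
        Finset.sum_add_distrib, ← Finset.mul_sum, ← sum_inner, hzero,
        inner_zero_left]
      have : ∀ i : Fin (d + 1), ‖v i - κ‖ ^ 2 = q * ℓ ^ 2 := by
        intro i; rw [← norm_neg, neg_sub]; exact key i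
      rw [Finset.sum_congr rfl fun i _ => this i, Finset.sum_const, Finset.sum_const,
        Finset.card_univ, Fintype.card_fin, nsmul_eq_mul, nsmul_eq_mul]
      push_cast
      ring
    have hub : (∑ i, ‖v i - c‖ ^ 2) ≤ ((d : ℝ) + 1) * r ^ 2 := by
      calc (∑ i, ‖v i - c‖ ^ 2) ≤ ∑ _i : Fin (d + 1), r ^ 2 := by
            refine Finset.sum_le_sum fun i _ => ?_
            have := Metric.mem_closedBall.1 (hc i)
            rw [dist_eq_norm] at this
            exact pow_le_pow_left₀ (norm_nonneg _) this 2
        _ = ((d : ℝ) + 1) * r ^ 2 := by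
            rw [Finset.sum_const, Finset.card_univ, Fintype.card_fin, nsmul_eq_mul]
            push_cast; ring
    have hqr : q * ℓ ^ 2 ≤ r ^ 2 := by
      have hpos : (0 : ℝ) < (d : ℝ) + 1 := by positivity
      nlinarith [sq_nonneg ‖κ - c‖, norm_nonneg (κ - c)]
    calc Real.sqrt q * ℓ = Real.sqrt (q * ℓ ^ 2) := hR
      _ ≤ Real.sqrt (r ^ 2) := Real.sqrt_le_sqrt hqr
      _ = r := Real.sqrt_sq hr0
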